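/- Let G be a connected finite loopless multigraph with first Betti number b₁(G) ≥ 1, and let S be a set of vertices of G each of which has degree at least 3. If |S| > 2(b₁(G) − 1), then at least one vertex of S is a cut vertex of G. (This is the combinatorial content of Proposition 4.13 of the paper.) -/
import Mathlib


namespace MG

variable {V E : Type}

/-- Adjacency in the multigraph with incidence map `ε`: `v` and `w` are joined by some
edge. -/
def Adj (ε : E → Sym2 V) (v w : V) : Prop := ∃ e, ε e = s(v, w)

/-- The number of connected components: the number of equivalence classes of the
reflexive-transitive (equivalence) closure of adjacency. -/
noncomputable def numComponents (ε : E → Sym2 V) : ℕ := Nat.card (Quot (Adj ε))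

/-- The degree of a vertex: the number of edges incident to it. -/
noncomputable def deg (ε : E → Sym2 V) (v : V) : ℕ := Nat.card {e : E // v ∈ ε e}

/-- The first Betti number `b₁(G) = |E| - |V| + c(G)`, as an integer. -/
noncomputable def b1 [Finite V] [Finite E] (ε : E → Sym2 V) : ℤ :=
  (Nat.card E : ℤ) - Nat.card V + numComponents ε

/-- Adjacency in the vertex-deleted multigraph `G - v`. -/
def AdjDel (ε : E → Sym2 V) (v : V) (a b : {w : V // w ≠ v}) : Prop :=
  ∃ e, v ∉ ε e ∧ ε e = s(a.1, b.1)

/-- The number of connected components of `G - v`. -/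
noncomputable def numComponentsDel (ε : E → Sym2 V) (v : V) : ℕ :=
  Nat.card (Quot (AdjDel ε v))

/-- The first Betti number of `G - v`, as an integer. -/
noncomputable def b1Del [Finite V] [Finite E] (ε : E → Sym2 V) (v : V) : ℤ :=
  (Nat.card {e : E // v ∉ ε e} : ℤ) - Nat.card {w : V // w ≠ v} + numComponentsDel ε v

/-- `v` is a cut vertex if deleting it increases the number of connected components. -/
def IsCutVertex (ε : E → Sym2 V) (v : V) : Prop :=
  numComponents ε < numComponentsDel ε v

end MG


open Relation

namespace MGAux

lemma eqvGen_avoid {α : Type*} {r : α → α → Prop} {x : α}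
    (h : ∀ a b, r a b → a ≠ x ∧ b ≠ x) {a b : α} (hab : EqvGen r a b) : a = x ↔ b = x := by
  induction hab with
  | rel a b hr => simp [(h a b hr).1, (h a b hr).2]
  | refl => exact Iff.rfl
  | symm _ _ _ ih => exact ih.symm
  | trans _ _ _ _ _ ih1 ih2 => exact ih1.trans ih2

lemma quot_mk_eq_of_eqvGen {α β : Type*} {r : α → α → Prop} {s : β → β → Prop} (f : α → β)
    (h : ∀ x y, r x y → Quot.mk s (f x) = Quot.mk s (f y)) {a b : α} (hab : EqvGen r a b) :
    Quot.mk s (f a) = Quot.mk s (f b) := by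
  induction hab with
  | rel a b hr => exact h a b hr
  | refl => rfl
  | symm _ _ _ ih => exact ih.symm
  | trans _ _ _ _ _ ih1 ih2 => exact ih1.trans ih2

lemma mem_attachWith {α : Type*} {P : α → Prop} {z : Sym2 α} {h : ∀ a ∈ z, P a}
    {a : {x // P x}} : a ∈ z.attachWith h ↔ a.1 ∈ z := by
  constructor
  · intro ha
    have : a.1 ∈ (z.attachWith h).map Subtype.val := Sym2.mem_map.mpr ⟨a, ha, rfl⟩
    rwa [Sym2.attachWith_map_subtypeVal] at this
  · intro ha
    have : a.1 ∈ (z.attachWith h).map Subtype.val := by rwa [Sym2.attachWith_map_subtypeVal]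
    obtain ⟨b, hb, hba⟩ := Sym2.mem_map.mp this
    rwa [show a = b from (Subtype.ext hba.symm)]

lemma attachWith_eq_iff {α : Type*} {P : α → Prop} {z : Sym2 α} {h : ∀ a ∈ z, P a}
    {a b : {x // P x}} : z.attachWith h = s(a, b) ↔ z = s(a.1, b.1) := by
  constructor
  · intro he
    have := congrArg (Sym2.map Subtype.val) he
    rwa [Sym2.attachWith_map_subtypeVal, Sym2.map_pair_eq] at this
  · intro he
    apply Sym2.map.injective Subtype.val_injective
    rw [Sym2.attachWith_map_subtypeVal, Sym2.map_pair_eq, he]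

lemma attachWith_not_isDiag {α : Type*} {P : α → Prop} {z : Sym2 α} {h : ∀ a ∈ z, P a}
    (hz : ¬ z.IsDiag) : ¬ (z.attachWith h).IsDiag := by
  intro hd
  exact hz (by simpa [Sym2.attachWith_map_subtypeVal] using hd.map (f := Subtype.val))

lemma card_filter_mem {V : Type} [Fintype V] [DecidableEq V] {z : Sym2 V} (hz : ¬ z.IsDiag) :
    (Finset.univ.filter (fun v => v ∈ z)).card = 2 := by
  induction z with
  | _ x y =>
    have hxy : x ≠ y := by simpa [Sym2.mk_isDiag_iff] using hz
    have : (Finset.univ.filter (fun v => v ∈ s(x, y))) = {x, y} := by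
      ext v; simp [Sym2.mem_iff]
    rw [this, Finset.card_insert_of_notMem (by simp [hxy]), Finset.card_singleton]

lemma handshake {V E : Type} [Fintype V] [Fintype E] (ε : E → Sym2 V)
    (hloop : ∀ e, ¬ (ε e).IsDiag) : ∑ v : V, MG.deg ε v = 2 * Fintype.card E := by
  classical
  have hdeg : ∀ v, MG.deg ε v = (Finset.univ.filter (fun e => v ∈ ε e)).card := by
    intro v
    rw [MG.deg, Nat.card_eq_fintype_card, Fintype.card_subtype]
  calc ∑ v : V, MG.deg ε v
      = ∑ v : V, ∑ e : E, (if v ∈ ε e then 1 else 0) := by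
        refine Finset.sum_congr rfl (fun v _ => ?_)
        rw [hdeg v, Finset.card_filter]
    _ = ∑ e : E, ∑ v : V, (if v ∈ ε e then 1 else 0) := Finset.sum_comm
    _ = ∑ e : E, (Finset.univ.filter (fun v => v ∈ ε e)).card := by
        refine Finset.sum_congr rfl (fun e _ => ?_)
        rw [Finset.card_filter]
    _ = ∑ _e : E, 2 := Finset.sum_congr rfl (fun e _ => card_filter_mem (hloop e))
    _ = 2 * Fintype.card E := by simp [Finset.card_univ, mul_comm]

end MGAux

namespace MGAux

theorem aux : ∀ n : ℕ, ∀ (V E : Type) (_ : Finite V) (_ : Finite E) (ε : E → Sym2 V),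
    Nat.card V = n →
    (∀ e, ¬ (ε e).IsDiag) → MG.numComponents ε = 1 → 1 ≤ MG.b1 ε →
    ∀ S : Set V, (∀ v ∈ S, 3 ≤ MG.deg ε v) → 2 * (MG.b1 ε - 1) < (S.ncard : ℤ) →
    ∃ v ∈ S, MG.IsCutVertex ε v := by
  intro n
  induction n using Nat.strong_induction_on with
  | _ n IH =>
  intro V E _ _ ε hn hloop hconn hb1 S hS hcard
  classical
  letI : Fintype V := Fintype.ofFinite V
  letI : Fintype E := Fintype.ofFinite E
  by_cases hmin : ∀ v : V, 2 ≤ MG.deg ε v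
  · -- minimum degree 2: contradiction by counting
    exfalso
    have hhs : ∑ v : V, MG.deg ε v = 2 * Fintype.card E := handshake ε hloop
    have hTcard : S.ncard = (Set.toFinite S).toFinset.card :=
      Set.ncard_eq_toFinset_card S (Set.toFinite S)
    set T : Finset V := (Set.toFinite S).toFinset with hT
    have h1 : (T.card : ℤ) ≤ ∑ v : V, ((MG.deg ε v : ℤ) - 2) := by
      calc (T.card : ℤ) = ∑ _v ∈ T, (1 : ℤ) := by simp
        _ ≤ ∑ v ∈ T, ((MG.deg ε v : ℤ) - 2) := by
            refine Finset.sum_le_sum (fun v hv => ?_)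
            have := hS v ((Set.Finite.mem_toFinset _).mp hv)
            have : (3 : ℤ) ≤ MG.deg ε v := by exact_mod_cast this
            omega
        _ ≤ ∑ v : V, ((MG.deg ε v : ℤ) - 2) := by
            refine Finset.sum_le_sum_of_subset_of_nonneg (Finset.subset_univ T) ?_
            intro v _ _
            have := hmin v
            have : (2 : ℤ) ≤ MG.deg ε v := by exact_mod_cast this
            omega
    have h2 : ∑ v : V, ((MG.deg ε v : ℤ) - 2) =
        2 * (Fintype.card E : ℤ) - 2 * (Fintype.card V : ℤ) := by
      rw [Finset.sum_sub_distrib]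
      have : ∑ v : V, (MG.deg ε v : ℤ) = 2 * (Fintype.card E : ℤ) := by
        exact_mod_cast congrArg (Nat.cast (R := ℤ)) hhs
      rw [this]
      simp [Finset.card_univ]
      ring
    have hb : MG.b1 ε = (Fintype.card E : ℤ) - (Fintype.card V : ℤ) + 1 := by
      rw [MG.b1, hconn]
      simp [Nat.card_eq_fintype_card]
    rw [hTcard] at hcard
    rw [hb] at hcard
    omega
  · push_neg at hmin
    obtain ⟨u, hu⟩ := hmin
    interval_cases h : MG.deg ε u
    · -- degree 0
      exfalso
      have hnoedge : ∀ e, u ∉ ε e := by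
        intro e he
        have : 0 < MG.deg ε u := @Nat.card_pos _ ⟨(⟨e, he⟩ : {e : E // u ∈ ε e})⟩ _
        omega
      have hiso : ∀ a b, MG.Adj ε a b → a ≠ u ∧ b ≠ u := by
        rintro a b ⟨e, he⟩
        constructor <;> rintro rfl <;> refine hnoedge e ?_ <;> rw [he]
        · exact Sym2.mem_iff.mpr (Or.inl rfl)
        · exact Sym2.mem_iff.mpr (Or.inr rfl)
      by_cases hV : ∀ x : V, x = u
      · have hVsub : Subsingleton V := ⟨fun a b => (hV a).trans (hV b).symm⟩
        have hE : IsEmpty E := ⟨fun e => hloop e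
          (Sym2.ind (fun x y => Sym2.mk_isDiag_iff.mpr (Subsingleton.elim x y)) (ε e))⟩
        have hEc : Nat.card E = 0 := @Nat.card_of_isEmpty E hE
        have hVc : Nat.card V = 1 := Nat.card_eq_one_iff_unique.mpr ⟨hVsub, ⟨u⟩⟩
        rw [MG.b1, hconn, hEc, hVc] at hb1
        norm_num at hb1
      · push_neg at hV
        obtain ⟨x, hx⟩ := hV
        have hsub : Subsingleton (Quot (MG.Adj ε)) := (Nat.card_eq_one_iff_unique.mp hconn).1
        have heq : Quot.mk (MG.Adj ε) u = Quot.mk (MG.Adj ε) x := @Subsingleton.elim _ hsub _ _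
        exact hx ((eqvGen_avoid hiso (Quot.eqvGen_exact heq)).mp rfl)
    · -- degree 1
      obtain ⟨hsub1, hne1⟩ := Nat.card_eq_one_iff_unique.mp h
      obtain ⟨⟨e0, he0⟩⟩ := hne1
      have huniq : ∀ e, u ∈ ε e → e = e0 := fun e he =>
        congrArg Subtype.val (@Subsingleton.elim _ hsub1 ⟨e, he⟩ ⟨e0, he0⟩)
      obtain ⟨w, hw⟩ : ∃ w, ε e0 = s(u, w) := Sym2.mem_iff_exists.mp he0
      have hwu : w ≠ u := by
        rintro rfl
        exact hloop e0 (by rw [hw]; exact Sym2.mk_isDiag_iff.mpr rfl)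
      have huS : u ∉ S := fun hu' => by have := hS u hu'; omega
      -- u is isolated after deleting any vertex of an edge-free context
      have hu_isolated : ∀ (v : V) (hv : u ≠ v) (a b : {x : V // x ≠ v}),
          MG.AdjDel ε v a b → (v ∈ ε e0) → a ≠ ⟨u, hv⟩ ∧ b ≠ ⟨u, hv⟩ := by
        rintro v hv a b ⟨e, hve, he⟩ hv0
        constructor <;> rintro rfl
        · exact hve (by rw [huniq e (by rw [he]; exact Sym2.mem_iff.mpr (Or.inl rfl))]; exact hv0)
        · exact hve (by rw [huniq e (by rw [he]; exact Sym2.mem_iff.mpr (Or.inr rfl))]; exact hv0)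
      by_cases hwS : w ∈ S
      · -- w is a cut vertex
        refine ⟨w, hwS, ?_⟩
        -- find a third vertex
        have hx : ∃ x : V, x ≠ u ∧ x ≠ w := by
          by_contra hno
          push_neg at hno
          -- every edge contains u, so E is subsingleton, contradicting deg w ≥ 3
          have hallu : ∀ e : E, e = e0 := by
            intro e
            obtain ⟨x, y, hxy⟩ : ∃ x y, ε e = s(x, y) :=
              Sym2.exists.mp ⟨ε e, rfl⟩
            have hxyne : x ≠ y := by
              intro hh; exact hloop e (by rw [hxy, hh]; exact Sym2.mk_isDiag_iff.mpr rfl)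
            have hu' : u ∈ ε e := by
              rw [hxy]
              rcases eq_or_ne x u with rfl | hxu'
              · exact Sym2.mem_iff.mpr (Or.inl rfl)
              · rcases eq_or_ne y u with rfl | hyu'
                · exact Sym2.mem_iff.mpr (Or.inr rfl)
                · exact absurd ((hno x hxu').trans (hno y hyu').symm) hxyne
            exact huniq e hu'
          have hsubE : Subsingleton {e : E // w ∈ ε e} :=
            ⟨fun a b => Subtype.ext ((hallu a.1).trans (hallu b.1).symm)⟩
          have : MG.deg ε w ≤ 1 := by
            rw [MG.deg]
            exact Finite.card_le_one_iff_subsingleton.mpr hsubE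
          have := hS w hwS
          omega
        obtain ⟨x, hxu, hxw⟩ := hx
        rw [MG.IsCutVertex, hconn]
        rw [MG.numComponentsDel]
        rw [Finite.one_lt_card_iff_nontrivial]
        refine ⟨Quot.mk _ ⟨u, hwu.symm⟩, Quot.mk _ ⟨x, hxw⟩, fun hq => ?_⟩
        have havoid : ∀ a b, MG.AdjDel ε w a b →
            a ≠ (⟨u, hwu.symm⟩ : {z : V // z ≠ w}) ∧ b ≠ ⟨u, hwu.symm⟩ :=
          fun a b hab => hu_isolated w hwu.symm a b hab
            (by rw [hw]; exact Sym2.mem_iff.mpr (Or.inr rfl))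
        have := (eqvGen_avoid havoid (Quot.eqvGen_exact hq)).mp rfl
        exact hxu (congrArg Subtype.val this)
      · -- inductive step: delete the leaf u
        have hmem0 : ∀ e : E, u ∉ ε e → ∀ a ∈ ε e, a ≠ u := fun e he a ha hau => he (hau ▸ ha)
        set ε' : {e : E // u ∉ ε e} → Sym2 {x : V // x ≠ u} :=
          fun e => (ε e.1).attachWith (hmem0 e.1 e.2) with hε'
        have hkey : ∀ (e : {e : E // u ∉ ε e}) (a b : {x : V // x ≠ u}),
            ε' e = s(a, b) ↔ ε e.1 = s(a.1, b.1) := fun e a b => attachWith_eq_iff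
        have hmemiff : ∀ (e : {e : E // u ∉ ε e}) (a : {x : V // x ≠ u}),
            a ∈ ε' e ↔ a.1 ∈ ε e.1 := fun e a => mem_attachWith
        have hloop' : ∀ e, ¬ (ε' e).IsDiag := fun e => attachWith_not_isDiag (hloop e.1)
        -- connectivity of G - u
        have hconn' : MG.numComponents ε' = 1 := by
          rw [MG.numComponents, Nat.card_eq_one_iff_unique]
          set f : V → {x : V // x ≠ u} := fun x => if hx : x = u then ⟨w, hwu⟩ else ⟨x, hx⟩
            with hf
          have hfne : ∀ (x : V) (hx : x ≠ u), f x = ⟨x, hx⟩ := fun x hx => dif_neg hx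
          have hstep : ∀ x y, MG.Adj ε x y →
              Quot.mk (MG.Adj ε') (f x) = Quot.mk (MG.Adj ε') (f y) := by
            rintro x y ⟨e, he⟩
            by_cases hue : u ∈ ε e
            · have he0' : s(x, y) = s(u, w) := by rw [← he, huniq e hue, hw]
              have hfuw : f u = f w := by rw [hfne w hwu, hf]; simp
              rcases Sym2.eq_iff.mp he0' with ⟨rfl, rfl⟩ | ⟨rfl, rfl⟩
              · rw [hfuw]
              · rw [hfuw]
            · have hxu : x ≠ u := by
                rintro rfl; exact hue (by rw [he]; exact Sym2.mem_iff.mpr (Or.inl rfl))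
              have hyu : y ≠ u := by
                rintro rfl; exact hue (by rw [he]; exact Sym2.mem_iff.mpr (Or.inr rfl))
              refine Quot.sound ⟨⟨e, hue⟩, ?_⟩
              rw [hfne x hxu, hfne y hyu]
              exact (hkey ⟨e, hue⟩ ⟨x, hxu⟩ ⟨y, hyu⟩).mpr he
          have hVconn : Subsingleton (Quot (MG.Adj ε)) := (Nat.card_eq_one_iff_unique.mp hconn).1
          refine ⟨⟨fun a b => ?_⟩, ⟨Quot.mk _ ⟨w, hwu⟩⟩⟩
          induction a using Quot.ind with | _ a => ?_
          induction b using Quot.ind with | _ b => ?_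
          have hab : Quot.mk (MG.Adj ε) a.1 = Quot.mk (MG.Adj ε) b.1 :=
            @Subsingleton.elim _ hVconn _ _
          have := quot_mk_eq_of_eqvGen f hstep (Quot.eqvGen_exact hab)
          rwa [hfne a.1 a.2, hfne b.1 b.2, Subtype.coe_eta, Subtype.coe_eta] at this
        -- cardinalities
        have hsplitE : Nat.card {e : E // u ∈ ε e} + Nat.card {e : E // u ∉ ε e} = Nat.card E := by
          rw [← Nat.card_sum]
          exact Nat.card_congr (Equiv.sumCompl (fun e => u ∈ ε e))
        have hsplitV : Nat.card {x : V // x = u} + Nat.card {x : V // x ≠ u} = Nat.card V := by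
          rw [← Nat.card_sum]
          exact Nat.card_congr (Equiv.sumCompl (fun x => x = u))
        have hVu1 : Nat.card {x : V // x = u} = 1 :=
          Nat.card_eq_one_iff_unique.mpr ⟨⟨by rintro ⟨a, rfl⟩ ⟨b, rfl⟩; rfl⟩, ⟨⟨u, rfl⟩⟩⟩
        have hdg : Nat.card {e : E // u ∈ ε e} = 1 := h
        have hEc : Nat.card {e : E // u ∉ ε e} = Nat.card E - 1 := by omega
        have hVc : Nat.card {x : V // x ≠ u} = Nat.card V - 1 := by omega
        have hEpos : 1 ≤ Nat.card E := @Nat.card_pos E ⟨e0⟩ _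
        have hVpos : 1 ≤ Nat.card V := @Nat.card_pos V ⟨u⟩ _
        -- Betti number is unchanged
        have hb1' : MG.b1 ε' = MG.b1 ε := by
          rw [MG.b1, MG.b1, hconn, hconn', hEc, hVc]
          rw [Nat.cast_sub hEpos, Nat.cast_sub hVpos]
          push_cast
          ring
        -- the set S inside the smaller graph
        set S' : Set {x : V // x ≠ u} := {x | x.1 ∈ S} with hS'def
        have hSim : Subtype.val '' S' = S := by
          ext x
          constructor
          · rintro ⟨y, hy, rfl⟩; exact hy
          · intro hx; exact ⟨⟨x, fun hh => huS (hh ▸ hx)⟩, hx, rfl⟩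
        have hScard : S'.ncard = S.ncard := by
          rw [← hSim, Set.ncard_image_of_injective _ Subtype.val_injective]
        -- degrees are unchanged on S
        have hdeg' : ∀ x : {x : V // x ≠ u}, x.1 ∈ S → MG.deg ε' x = MG.deg ε x.1 := by
          intro x hx
          have hnotu : ∀ e : E, x.1 ∈ ε e → u ∉ ε e := by
            intro e he hue
            rw [huniq e hue, hw] at he
            rcases Sym2.mem_iff.mp he with h1 | h1
            · exact x.2 h1
            · exact hwS (h1 ▸ hx)
          rw [MG.deg, MG.deg]
          exact Nat.card_congr
            { toFun := fun e => ⟨e.1.1, (hmemiff e.1 x).mp e.2⟩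
              invFun := fun e => ⟨⟨e.1, hnotu e.1 e.2⟩, (hmemiff ⟨e.1, hnotu e.1 e.2⟩ x).mpr e.2⟩
              left_inv := fun e => by apply Subtype.ext; apply Subtype.ext; rfl
              right_inv := fun e => rfl }
        -- apply the induction hypothesis
        have hn1 : 1 ≤ n := hn ▸ hVpos
        have hVn : Nat.card {x : V // x ≠ u} = n - 1 := by omega
        obtain ⟨v', hv'S, hv'cut⟩ :=
          IH (n - 1) (by omega) {x : V // x ≠ u} {e : E // u ∉ ε e}
            inferInstance inferInstance ε' hVn hloop' hconn'
            (by rw [hb1']; exact hb1) S'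
            (fun v hv => by rw [hdeg' v hv]; exact hS v.1 hv)
            (by rw [hb1', hScard]; exact hcard)
        -- transfer the cut vertex back to G
        refine ⟨v'.1, hv'S, ?_⟩
        rw [MG.IsCutVertex, hconn]
        have hcut1 : 1 < MG.numComponentsDel ε' v' := by rw [← hconn']; exact hv'cut
        have hvu : v'.1 ≠ u := v'.2
        have hvw : v'.1 ≠ w := fun hh => hwS (hh ▸ hv'S)
        set g : {x : V // x ≠ v'.1} → {x : {x : V // x ≠ u} // x ≠ v'} := fun x =>
          if hx : x.1 = u then ⟨⟨w, hwu⟩, fun hh => hvw (congrArg Subtype.val hh).symm⟩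
          else ⟨⟨x.1, hx⟩, fun hh => x.2 (congrArg Subtype.val hh)⟩ with hg
        have hgval : ∀ (c : {x : V // x ≠ v'.1}) (hc : c.1 ≠ u), g c = ⟨⟨c.1, hc⟩,
            fun hh => c.2 (congrArg Subtype.val hh)⟩ := fun c hc => dif_neg hc
        have hgw : ∀ (c : {x : V // x ≠ v'.1}), c.1 = u ∨ c.1 = w → (g c).1.1 = w := by
          intro c hc
          rcases hc with hc | hc
          · rw [hg]; simp only; rw [dif_pos hc]
          · rw [hg]; simp only; rw [dif_neg (fun hh => hwu (hc.symm.trans hh))]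
            exact hc
        have gresp : ∀ a b, MG.AdjDel ε v'.1 a b →
            Quot.mk (MG.AdjDel ε' v') (g a) = Quot.mk (MG.AdjDel ε' v') (g b) := by
          rintro a b ⟨e, hve, he⟩
          by_cases hue : u ∈ ε e
          · have hsab : s(a.1, b.1) = s(u, w) := by rw [← he, huniq e hue, hw]
            have hab : (a.1 = u ∨ a.1 = w) ∧ (b.1 = u ∨ b.1 = w) := by
              rcases Sym2.eq_iff.mp hsab with ⟨h1, h2⟩ | ⟨h1, h2⟩
              · exact ⟨Or.inl h1, Or.inr h2⟩
              · exact ⟨Or.inr h1, Or.inl h2⟩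
            have : g a = g b :=
              Subtype.ext (Subtype.ext ((hgw a hab.1).trans (hgw b hab.2).symm))
            rw [this]
          · have hau : a.1 ≠ u := by
              rintro hh
              apply hue
              rw [he]
              exact Sym2.mem_iff.mpr (Or.inl hh.symm)
            have hbu : b.1 ≠ u := by
              rintro hh
              apply hue
              rw [he]
              exact Sym2.mem_iff.mpr (Or.inr hh.symm)
            refine Quot.sound ⟨⟨e, hue⟩, ?_, ?_⟩
            · intro hmem
              exact hve ((hmemiff ⟨e, hue⟩ v').mp hmem)
            · rw [hgval a hau, hgval b hbu]
              exact (hkey ⟨e, hue⟩ ⟨a.1, hau⟩ ⟨b.1, hbu⟩).mpr he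
        have hsurj : Function.Surjective
            (Quot.lift (fun x => Quot.mk (MG.AdjDel ε' v') (g x)) gresp) := by
          intro q
          induction q using Quot.ind with | _ b => ?_
          refine ⟨Quot.mk _ ⟨b.1.1, fun hh => b.2 (Subtype.ext hh)⟩, ?_⟩
          have : g ⟨b.1.1, fun hh => b.2 (Subtype.ext hh)⟩ = b := by
            rw [hgval _ b.1.2]
          exact congrArg (Quot.mk _) this
        calc (1 : ℕ) < MG.numComponentsDel ε' v' := hcut1
          _ ≤ MG.numComponentsDel ε v'.1 := Nat.card_le_card_of_surjective _ hsurj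

end MGAux

/-- Proposition 4.13 of the paper: in a connected finite loopless multigraph `G` with
first Betti number `b₁(G) ≥ 1`, if a set `S` of vertices each of degree at least `3` has
more than `2(b₁(G) - 1)` elements, then some vertex of `S` is a cut vertex of `G`. -/

theorem exists_cutVertex {V E : Type} [Finite V] [Finite E]
    (ε : E → Sym2 V) (hloop : ∀ e, ¬ (ε e).IsDiag)
    (hconn : MG.numComponents ε = 1) (hb1 : 1 ≤ MG.b1 ε)
    (S : Set V) (hS : ∀ v ∈ S, 3 ≤ MG.deg ε v)
    (hcard : 2 * (MG.b1 ε - 1) < (S.ncard : ℤ)) :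
    ∃ v ∈ S, MG.IsCutVertex ε v :=
  MGAux.aux (Nat.card V) V E ‹_› ‹_› ε rfl hloop hconn hb1 S hS hcard
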